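/- Let d ≥ 1 and M, J ∈ ℕ. Let z_1,…,z_M ∈ ℝ^d be pairwise distinct, and let w_1,…,w_J ∈ ℝ^d be vectors such that for every subset T ⊆ {1,…,J} of cardinality d the family (w_j)_{j∈T} is linearly independent. Then for every l ∈ {1,…,M}, the number of indices j ∈ {1,…,J} for which there exists m ≠ l with ⟨w_j, z_l⟩ = ⟨w_j, z_m⟩ is at most (d−1)·(M−1). -/

import Mathlib

open Module

private lemma key_card (d J : ℕ) (hd : 1 ≤ d) (w : Fin J → EuclideanSpace ℝ (Fin d))
    (hw : ∀ T : Finset (Fin J), T.card = d →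
      LinearIndependent ℝ (fun j : T => w j.1))
    (v : EuclideanSpace ℝ (Fin d)) (hv : v ≠ 0) :
    (Finset.univ.filter (fun j : Fin J => (inner ℝ (w j) v : ℝ) = 0)).card ≤ d - 1 := by
  by_contra h
  push_neg at h
  have hdd : d ≤ (Finset.univ.filter (fun j : Fin J => (inner ℝ (w j) v : ℝ) = 0)).card := by
    omega
  obtain ⟨T, hT, hTcard⟩ := Finset.exists_subset_card_eq hdd
  have hli := hw T hTcard
  have hfr : finrank ℝ (EuclideanSpace ℝ (Fin d)) = (d - 1) + 1 := by
    simp [finrank_euclideanSpace_fin]; omega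
  haveI : Fact (finrank ℝ (EuclideanSpace ℝ (Fin d)) = (d - 1) + 1) := ⟨hfr⟩
  set K := (ℝ ∙ v)ᗮ with hK
  have hmem : ∀ j : T, w j.1 ∈ K := by
    intro j
    rw [hK, Submodule.mem_orthogonal_singleton_iff_inner_right]
    have := hT j.2
    simp only [Finset.mem_filter] at this
    have h2 := this.2
    rwa [real_inner_comm] at h2
  set f : T → K := fun j => ⟨w j.1, hmem j⟩ with hf
  have hlif : LinearIndependent ℝ f := by
    apply LinearIndependent.of_comp K.subtype
    exact hli
  have hcard := hlif.fintype_card_le_finrank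
  rw [Submodule.finrank_orthogonal_span_singleton (n := d - 1) hv] at hcard
  simp [Fintype.card_coe, hTcard] at hcard
  omega

/-- For pairwise distinct points `z_1, …, z_M ∈ ℝ^d` and vectors `w_1, …, w_J ∈ ℝ^d` such
that every `d` of them are linearly independent, for each `l` the number of indices `j`
for which `⟨w_j, z_l⟩ = ⟨w_j, z_m⟩` for some `m ≠ l` is at most `(d−1)(M−1)`. -/
theorem counting_bound (d M J : ℕ) (hd : 1 ≤ d)
    (z : Fin M → EuclideanSpace ℝ (Fin d)) (hz : Function.Injective z)
    (w : Fin J → EuclideanSpace ℝ (Fin d))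
    (hw : ∀ T : Finset (Fin J), T.card = d →
      LinearIndependent ℝ (fun j : T => w j.1))
    (l : Fin M) :
    {j : Fin J | ∃ m, m ≠ l ∧ (inner ℝ (w j) (z l) : ℝ) = (inner ℝ (w j) (z m) : ℝ)}.ncard
      ≤ (d - 1) * (M - 1) := by
  have hset : {j : Fin J | ∃ m, m ≠ l ∧ (inner ℝ (w j) (z l) : ℝ) = (inner ℝ (w j) (z m) : ℝ)}
      = ↑(Finset.univ.filter
        (fun j : Fin J => ∃ m, m ≠ l ∧ (inner ℝ (w j) (z l) : ℝ) = (inner ℝ (w j) (z m) : ℝ))) := by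
    ext j; simp
  rw [hset, Set.ncard_coe_finset]
  have hsub : (Finset.univ.filter
        (fun j : Fin J => ∃ m, m ≠ l ∧ (inner ℝ (w j) (z l) : ℝ) = (inner ℝ (w j) (z m) : ℝ)))
      ⊆ (Finset.univ.erase l).biUnion
        (fun m => Finset.univ.filter (fun j : Fin J => (inner ℝ (w j) (z l - z m) : ℝ) = 0)) := by
    intro j hj
    simp only [Finset.mem_filter, Finset.mem_univ, true_and] at hj
    obtain ⟨m, hm, heq⟩ := hj
    refine Finset.mem_biUnion.2 ⟨m, by simp [hm], ?_⟩
    simp only [Finset.mem_filter, Finset.mem_univ, true_and]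
    rw [inner_sub_right, sub_eq_zero]
    exact heq
  calc _ ≤ _ := Finset.card_le_card hsub
    _ ≤ ∑ m ∈ Finset.univ.erase l,
        (Finset.univ.filter (fun j : Fin J => (inner ℝ (w j) (z l - z m) : ℝ) = 0)).card :=
      Finset.card_biUnion_le
    _ ≤ ∑ m ∈ Finset.univ.erase l, (d - 1) := by
      apply Finset.sum_le_sum
      intro m hm
      have hmne : m ≠ l := (Finset.mem_erase.1 hm).1
      have hvne : z l - z m ≠ 0 := sub_ne_zero.2 fun h => hmne (hz h).symm
      exact key_card d J hd w hw _ hvne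
    _ ≤ (d - 1) * (M - 1) := by
      rw [Finset.sum_const, smul_eq_mul]
      have : (Finset.univ.erase l).card = M - 1 := by
        rw [Finset.card_erase_of_mem (Finset.mem_univ l), Finset.card_univ, Fintype.card_fin]
      rw [this, mul_comm]
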